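/- For every integer sequence X of length n ≥ 1, the number of peaks of X satisfies nb_peak(X) ≤ ⌊(n−1)/2⌋. -/

import Mathlib

/-- The signature of an integer sequence: the word over `{<,=,>}` (encoded as
`Ordering.lt`, `Ordering.eq`, `Ordering.gt`) comparing consecutive elements. -/
def signature (X : List ℤ) : List Ordering :=
  List.zipWith compare X X.tail

/-- The number of peaks of a word `w` over `{<,=,>}`: the number of positions `j`
with `w_j = '>'` such that there is `i < j` with `w_i = '<'` and `w_k = '='`
for all `i < k < j`. -/
noncomputable def nbPeak (w : List Ordering) : ℕ :=
  {j : ℕ | w[j]? = some Ordering.gt ∧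
    ∃ i < j, w[i]? = some Ordering.lt ∧
      ∀ k, i < k → k < j → w[k]? = some Ordering.eq}.ncard

lemma nbPeak_le_half (w : List Ordering) : nbPeak w ≤ w.length / 2 := by
  classical
  set P : Set ℕ := {j : ℕ | w[j]? = some Ordering.gt ∧
    ∃ i < j, w[i]? = some Ordering.lt ∧
      ∀ k, i < k → k < j → w[k]? = some Ordering.eq} with hP
  have hPsub : P ⊆ Set.Iio w.length := by
    intro j hj
    have := hj.1
    have : j < w.length := by
      by_contra h
      rw [List.getElem?_eq_none (by omega)] at this
      exact Option.some_ne_none _ this.symm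
    exact this
  have hfin : P.Finite := (Set.finite_Iio _).subset hPsub
  have hch : ∀ j ∈ P, ∃ i, i < j ∧ w[i]? = some Ordering.lt ∧
      ∀ k, i < k → k < j → w[k]? = some Ordering.eq := by
    intro j hj
    obtain ⟨i, hi1, hi2, hi3⟩ := hj.2
    exact ⟨i, hi1, hi2, hi3⟩
  choose! f hf1 hf2 hf3 using hch
  have key : ∀ j1 ∈ P, ∀ j2 ∈ P, j1 < j2 → j1 < f j2 := by
    intro j1 hj1 j2 hj2 hlt
    rcases lt_trichotomy (f j2) j1 with h | h | h
    · have := hf3 j2 hj2 j1 h hlt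
      rw [hj1.1] at this
      exact absurd (Option.some.inj this) (by decide)
    · have := hf2 j2 hj2
      rw [h, hj1.1] at this
      exact absurd (Option.some.inj this) (by decide)
    · exact h
  have hinj : Set.InjOn f P := by
    intro a ha b hb hab
    by_contra hne
    rcases Ne.lt_or_gt hne with h | h
    · have h1 := key a ha b hb h
      have h2 := hf1 a ha
      omega
    · have h1 := key b hb a ha h
      have h2 := hf1 b hb
      omega
  set Q : Set ℕ := f '' P with hQ
  have hQfin : Q.Finite := hfin.image f
  have hdisj : Disjoint P Q := by
    rw [Set.disjoint_left]
    rintro x hx ⟨j, hj, rfl⟩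
    have h1 := hf2 j hj
    have h2 := hx.1
    rw [h1] at h2
    exact absurd (Option.some.inj h2) (by decide)
  have hQsub : Q ⊆ Set.Iio w.length := by
    rintro x ⟨j, hj, rfl⟩
    have := hf1 j hj
    have := hPsub hj
    simp only [Set.mem_Iio] at *
    omega
  have hQcard : Q.ncard = P.ncard := Set.ncard_image_of_injOn hinj
  have hunion : (P ∪ Q).ncard = P.ncard + Q.ncard :=
    Set.ncard_union_eq hdisj hfin hQfin
  have hle : (P ∪ Q).ncard ≤ (Set.Iio w.length).ncard :=
    Set.ncard_le_ncard (Set.union_subset hPsub hQsub) (Set.finite_Iio _)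
  have hIio : (Set.Iio w.length).ncard = w.length := by
    rw [← Nat.card_coe_set_eq, Nat.card_eq_card_toFinset]
    simp
  have : 2 * P.ncard ≤ w.length := by omega
  have : nbPeak w = P.ncard := rfl
  omega

/-- For every integer sequence `X` of length `n ≥ 1`,
`nb_peak(X) ≤ ⌊(n−1)/2⌋`. -/
theorem nbPeak_le_floor (X : List ℤ) (hX : X ≠ []) :
    nbPeak (signature X) ≤ (X.length - 1) / 2 := by
  have h := nbPeak_le_half (signature X)
  have hlen : (signature X).length = X.length - 1 := by
    simp [signature, List.length_zipWith]
  omega
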